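/- The cycle graph C_9 on 9 vertices satisfies rvcl(C_9) = 4. -/

import Mathlib

namespace LocatingRainbow

open SimpleGraph

variable {V : Type*}

/-- The internal vertices of a walk: its support without the endpoints. -/
def internalVertices {G : SimpleGraph V} {u v : V} (p : G.Walk u v) : List V :=
  p.support.tail.dropLast

/-- `c` is a rainbow vertex coloring of `G` (with colors in `Fin k`) if any two distinct
vertices are joined by a path whose internal vertices have pairwise distinct colors. -/
def IsRainbowVertexColoring (G : SimpleGraph V) {k : ℕ} (c : V → Fin k) : Prop :=
  ∀ u v : V, u ≠ v → ∃ p : G.Walk u v, p.IsPath ∧ ((internalVertices p).map c).Nodup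

/-- The distance from a vertex `v` to the color class of the color `i`. -/
noncomputable def distToColor (G : SimpleGraph V) {k : ℕ} (c : V → Fin k) (v : V) (i : Fin k) :
    ℕ :=
  sInf {m | ∃ y, c y = i ∧ G.dist v y = m}

/-- The rainbow code of a vertex `v`: the vector of distances to all color classes. -/
noncomputable def rainbowCode (G : SimpleGraph V) {k : ℕ} (c : V → Fin k) (v : V) :
    Fin k → ℕ :=
  fun i => distToColor G c v i

/-- `c` is a locating rainbow coloring if it is a rainbow vertex coloring and distinct
vertices have distinct rainbow codes. -/
def IsLocatingRainbowColoring (G : SimpleGraph V) {k : ℕ} (c : V → Fin k) : Prop :=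
  IsRainbowVertexColoring G c ∧ Function.Injective (rainbowCode G c)

/-- The rainbow vertex connection number of `G`. -/
noncomputable def rvc (G : SimpleGraph V) : ℕ :=
  sInf {k | ∃ c : V → Fin k, IsRainbowVertexColoring G c}

/-- The locating rainbow connection number of `G`. -/
noncomputable def rvcl (G : SimpleGraph V) : ℕ :=
  sInf {k | ∃ c : V → Fin k, IsLocatingRainbowColoring G c}

end LocatingRainbow

namespace C9Aux

open SimpleGraph LocatingRainbow
open Fin.NatCast Fin.CommRing

abbrev G9 : SimpleGraph (Fin 9) := cycleGraph 9

/-- Cyclic distance on `Fin 9`. -/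
def cdist (u v : Fin 9) : ℕ := min (v - u).val (u - v).val

lemma adj_succ (u : Fin 9) : G9.Adj u (u + 1) := by
  rw [cycleGraph_adj']; right; simp

lemma adj_pred (u : Fin 9) : G9.Adj u (u - 1) := by
  rw [cycleGraph_adj']; left; simp

/-- The clockwise walk of length `m` starting at `u`. -/
def cwWalk (u : Fin 9) : (m : ℕ) → G9.Walk u (u + (m : Fin 9))
  | 0 => Walk.nil.copy rfl (by simp)
  | m+1 => ((cwWalk (u+1) m).cons (adj_succ u)).copy rfl (by push_cast; ring)

/-- The counterclockwise walk of length `m` starting at `u`. -/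
def ccwWalk (u : Fin 9) : (m : ℕ) → G9.Walk u (u - (m : Fin 9))
  | 0 => Walk.nil.copy rfl (by simp)
  | m+1 => ((ccwWalk (u-1) m).cons (adj_pred u)).copy rfl (by push_cast; ring)

lemma length_cwWalk (u : Fin 9) (m : ℕ) : (cwWalk u m).length = m := by
  induction m generalizing u with
  | zero => simp [cwWalk]
  | succ m ih => simp [cwWalk, ih]

lemma length_ccwWalk (u : Fin 9) (m : ℕ) : (ccwWalk u m).length = m := by
  induction m generalizing u with
  | zero => simp [ccwWalk]
  | succ m ih => simp [ccwWalk, ih]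

lemma cons_arc_cw (u : Fin 9) (L : ℕ) :
    u :: (List.range (L+1)).map (fun j : ℕ => (u+1) + (j : Fin 9))
      = (List.range (L+2)).map (fun j : ℕ => u + (j : Fin 9)) := by
  rw [List.range_succ_eq_map (n := L+1), List.map_cons, List.map_map]
  refine List.cons_eq_cons.mpr ⟨by simp, ?_⟩
  apply List.map_congr_left
  intro j _
  simp only [Function.comp_apply]
  push_cast
  ring

lemma cons_arc_ccw (u : Fin 9) (L : ℕ) :
    u :: (List.range (L+1)).map (fun j : ℕ => (u-1) - (j : Fin 9))
      = (List.range (L+2)).map (fun j : ℕ => u - (j : Fin 9)) := by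
  rw [List.range_succ_eq_map (n := L+1), List.map_cons, List.map_map]
  refine List.cons_eq_cons.mpr ⟨by simp, ?_⟩
  apply List.map_congr_left
  intro j _
  simp only [Function.comp_apply]
  push_cast
  ring

lemma support_cwWalk (u : Fin 9) (m : ℕ) :
    (cwWalk u m).support = (List.range (m+1)).map (fun j : ℕ => u + (j : Fin 9)) := by
  induction m generalizing u with
  | zero => simp [cwWalk, List.range_succ]
  | succ m ih =>
    rw [cwWalk, Walk.support_copy, Walk.support_cons, ih (u+1), cons_arc_cw]

lemma support_ccwWalk (u : Fin 9) (m : ℕ) :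
    (ccwWalk u m).support = (List.range (m+1)).map (fun j : ℕ => u - (j : Fin 9)) := by
  induction m generalizing u with
  | zero => simp [ccwWalk, List.range_succ]
  | succ m ih =>
    rw [ccwWalk, Walk.support_copy, Walk.support_cons, ih (u-1), cons_arc_ccw]

lemma cdist_le_walk {v u : Fin 9} (w : G9.Walk u v) : cdist u v ≤ w.length := by
  induction w with
  | nil => simp [cdist]
  | cons h p ih =>
    have key : ∀ x y z : Fin 9, ((x - y).val = 1 ∨ (y - x).val = 1) →
        cdist x z ≤ cdist y z + 1 := by decide
    simp only [Walk.length_cons]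
    exact le_trans (key _ _ _ (cycleGraph_adj'.mp h)) (Nat.add_le_add_right ih 1)

lemma dist_eq (u v : Fin 9) : G9.dist u v = cdist u v := by
  have e1 : u + (((v - u).val : ℕ) : Fin 9) = v := by rw [Fin.cast_val_eq_self]; abel
  have e2 : u - (((u - v).val : ℕ) : Fin 9) = v := by rw [Fin.cast_val_eq_self]; abel
  refine le_antisymm (le_min ?_ ?_) ?_
  · have := SimpleGraph.dist_le ((cwWalk u (v - u).val).copy rfl e1)
    rwa [Walk.length_copy, length_cwWalk] at this
  · have := SimpleGraph.dist_le ((ccwWalk u (u - v).val).copy rfl e2)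
    rwa [Walk.length_copy, length_ccwWalk] at this
  · obtain ⟨p, hp⟩ :=
      (Walk.reachable ((cwWalk u (v - u).val).copy rfl e1)).exists_walk_length_eq_dist
    rw [← hp]
    exact cdist_le_walk p

/-- Any path in `C₉` travels monotonically clockwise or counterclockwise. -/
lemma path_arc {u v : Fin 9} (w : G9.Walk u v) (hw : w.IsPath) :
    (v = u + ((w.length : ℕ) : Fin 9) ∧
      w.support = (List.range (w.length+1)).map (fun j : ℕ => u + (j : Fin 9)))
    ∨ (v = u - ((w.length : ℕ) : Fin 9) ∧
      w.support = (List.range (w.length+1)).map (fun j : ℕ => u - (j : Fin 9))) := by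
  induction w with
  | nil => left; constructor <;> simp [List.range_succ]
  | @cons a b c h p ih =>
    rw [Walk.cons_isPath_iff] at hw
    obtain ⟨hp, ha⟩ := hw
    have h' := cycleGraph_adj'.mp h
    have hb : b = a + 1 ∨ b = a - 1 := by
      rcases h' with h1 | h1
      · right
        have h2 : a - b = 1 := Fin.ext (by simpa using h1)
        rw [← h2]; abel
      · left
        have h2 : b - a = 1 := Fin.ext (by simpa using h1)
        rw [← h2]; abel
    rcases hb with hb | hb
    · -- step clockwise; path must continue clockwise
      subst hb
      have key : c = (a+1) + ((p.length : ℕ) : Fin 9) ∧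
          p.support = (List.range (p.length+1)).map (fun j : ℕ => (a+1) + (j : Fin 9)) := by
        rcases ih hp with ⟨hv, hs⟩ | ⟨hv, hs⟩
        · exact ⟨hv, hs⟩
        · rcases Nat.eq_zero_or_pos p.length with h0 | h1
          · rw [h0] at hv hs ⊢
            constructor
            · simpa [List.range_succ] using hv
            · simpa [List.range_succ] using hs
          · exfalso
            apply ha
            rw [hs]
            refine List.mem_map.mpr ⟨1, List.mem_range.mpr (by omega), by simp⟩
      obtain ⟨hv, hs⟩ := key
      left
      constructor
      · refine hv.trans ?_; simp only [Walk.length_cons]; push_cast; ring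
      · rw [Walk.support_cons, hs]
        simpa using cons_arc_cw a p.length
    · subst hb
      have key : c = (a-1) - ((p.length : ℕ) : Fin 9) ∧
          p.support = (List.range (p.length+1)).map (fun j : ℕ => (a-1) - (j : Fin 9)) := by
        rcases ih hp with ⟨hv, hs⟩ | ⟨hv, hs⟩
        · rcases Nat.eq_zero_or_pos p.length with h0 | h1
          · rw [h0] at hv hs ⊢
            constructor
            · simpa [List.range_succ] using hv
            · simpa [List.range_succ] using hs
          · exfalso
            apply ha
            rw [hs]
            refine List.mem_map.mpr ⟨1, List.mem_range.mpr (by omega), by simp⟩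
        · exact ⟨hv, hs⟩
      obtain ⟨hv, hs⟩ := key
      right
      constructor
      · refine hv.trans ?_; simp only [Walk.length_cons]; push_cast; ring
      · rw [Walk.support_cons, hs]
        simpa using cons_arc_ccw a p.length

/-- The internal vertices of the clockwise arc of length `L` from `u`. -/
def cwI (u : Fin 9) (L : ℕ) : List (Fin 9) :=
  (((List.range (L+1)).map (fun j : ℕ => u + (j : Fin 9))).tail).dropLast

/-- The internal vertices of the counterclockwise arc of length `L` from `u`. -/
def ccwI (u : Fin 9) (L : ℕ) : List (Fin 9) :=
  (((List.range (L+1)).map (fun j : ℕ => u - (j : Fin 9))).tail).dropLast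

/-- A decidable surrogate of the rainbow vertex coloring condition. -/
def Surr {k : ℕ} (c : Fin 9 → Fin k) : Prop :=
  ∀ u v : Fin 9, u ≠ v → ∃ L : Fin 9,
    (v = u + L ∧ ((cwI u L.val).map c).Nodup) ∨
    (v = u - L ∧ ((ccwI u L.val).map c).Nodup)

instance {k : ℕ} (c : Fin 9 → Fin k) : Decidable (Surr c) := by
  unfold Surr; infer_instance

lemma surr_of_rainbow {k : ℕ} (c : Fin 9 → Fin k)
    (h : IsRainbowVertexColoring G9 c) : Surr c := by
  intro u v huv
  obtain ⟨p, hp, hnd⟩ := h u v huv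
  have hlen : p.length ≤ 8 := by
    have h9 : p.support.length ≤ 9 := by
      simpa using List.Nodup.length_le_card hp.support_nodup
    rw [Walk.length_support] at h9
    omega
  have hcast : ((p.length : ℕ) : Fin 9) = ⟨p.length, by omega⟩ :=
    Fin.ext (Fin.val_cast_of_lt (by omega))
  refine ⟨⟨p.length, by omega⟩, ?_⟩
  rcases path_arc p hp with ⟨hv, hs⟩ | ⟨hv, hs⟩
  · left
    refine ⟨hv.trans (by rw [hcast]), ?_⟩
    rw [internalVertices, hs] at hnd
    exact hnd
  · right
    refine ⟨hv.trans (by rw [hcast]), ?_⟩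
    rw [internalVertices, hs] at hnd
    exact hnd

/-- Computable version of the rainbow code, via an auxiliary function. -/
def codeFAux (s : Finset (Fin 9)) (v : Fin 9) : ℕ :=
  if h : s.Nonempty then s.inf' h (cdist v) else 0

def codeF {k : ℕ} (c : Fin 9 → Fin k) (v : Fin 9) (i : Fin k) : ℕ :=
  codeFAux (Finset.univ.filter (fun y => c y = i)) v

lemma rainbowCode_eq {k : ℕ} (c : Fin 9 → Fin k) (v : Fin 9) :
    rainbowCode G9 c v = codeF c v := by
  funext i
  show distToColor G9 c v i = codeF c v i
  rw [distToColor, codeF, codeFAux]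
  split_ifs with h
  · refine IsLeast.csInf_eq ⟨?_, ?_⟩
    · obtain ⟨y, hy, hy2⟩ := Finset.exists_mem_eq_inf' h (cdist v)
      exact ⟨y, (Finset.mem_filter.mp hy).2, by rw [dist_eq, ← hy2]⟩
    · rintro m ⟨y, hcy, hdy⟩
      rw [← hdy, dist_eq]
      exact Finset.inf'_le _ (Finset.mem_filter.mpr ⟨Finset.mem_univ y, hcy⟩)
  · have : {m | ∃ y, c y = i ∧ G9.dist v y = m} = ∅ := by
      rw [Set.eq_empty_iff_forall_notMem]
      rintro m ⟨y, hcy, -⟩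
      exact h ⟨y, Finset.mem_filter.mpr ⟨Finset.mem_univ y, hcy⟩⟩
    rw [this, Nat.sInf_empty]

lemma codeF_cast {k : ℕ} (hk : k ≤ 3) (c : Fin 9 → Fin k) (v : Fin 9) (i : Fin k) :
    codeF (fun y => Fin.castLE hk (c y)) v (Fin.castLE hk i) = codeF c v i := by
  unfold codeF
  congr 1
  apply Finset.filter_congr
  intro y _
  simp

/-- The "internal vertices of arcs of length 4 are rainbow" condition. -/
def Triples {k : ℕ} (c : Fin 9 → Fin k) : Prop :=
  ∀ u : Fin 9, ((cwI u 4).map c).Nodup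

instance {k : ℕ} (c : Fin 9 → Fin k) : Decidable (Triples c) := by
  unfold Triples; infer_instance

lemma triples_of_surr (c : Fin 9 → Fin 3) (h : Surr c) : Triples c := by
  intro u
  have hne : u ≠ u + 4 := by
    intro hu
    have := congrArg (fun x => x - u) hu
    simpa using this
  obtain ⟨L, hL⟩ := h u (u + 4) hne
  rcases hL with ⟨he, hnd⟩ | ⟨he, hnd⟩
  · have h4 : (4 : Fin 9) = L := add_left_cancel he
    have h4' : L.val = 4 := by rw [← h4]; rfl
    rwa [h4'] at hnd
  · exfalso
    have h4 : (4 : Fin 9) = -L := by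
      apply add_left_cancel (a := u)
      rw [← sub_eq_add_neg]
      exact he
    have h5 : L = 5 := by rw [← neg_neg L, ← h4]; decide
    have h5' : L.val = 5 := by rw [h5]; rfl
    rw [h5'] at hnd
    have hlen : ((ccwI u 5).map c).length = 4 := by simp [ccwI]
    have := List.Nodup.length_le_card hnd
    rw [hlen] at this
    simp at this

lemma cwI4 (u : Fin 9) : cwI u 4 = [u+1, u+2, u+3] := by
  simp [cwI, List.range_succ]

lemma cdist_shift (v y : Fin 9) : cdist (v + 3) (y + 3) = cdist v y := by
  unfold cdist
  congr 2 <;> ring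

lemma codeF_shift (c : Fin 9 → Fin 3) (hper : ∀ u, c (u + 3) = c u) (v : Fin 9) (i : Fin 3) :
    codeF c (v + 3) i = codeF c v i := by
  unfold codeF codeFAux
  set s : Finset (Fin 9) := Finset.univ.filter (fun y => c y = i) with hsdef
  have hmem : ∀ y ∈ s, y + 3 ∈ s := by
    intro y hy
    rw [hsdef, Finset.mem_filter] at hy ⊢
    exact ⟨Finset.mem_univ _, (hper y).trans hy.2⟩
  have hmem' : ∀ y ∈ s, y - 3 ∈ s := by
    intro y hy
    rw [hsdef, Finset.mem_filter] at hy ⊢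
    refine ⟨Finset.mem_univ _, ?_⟩
    have e : y - 3 + 3 = y := by abel
    rw [← hper (y - 3), e]
    exact hy.2
  split_ifs with h
  · apply le_antisymm
    · obtain ⟨y, hy, hyeq⟩ := Finset.exists_mem_eq_inf' h (cdist v)
      rw [hyeq, ← cdist_shift v y]
      exact Finset.inf'_le _ (hmem y hy)
    · obtain ⟨y, hy, hyeq⟩ := Finset.exists_mem_eq_inf' h (cdist (v + 3))
      rw [hyeq]
      have e : y - 3 + 3 = y := by abel
      have : cdist (v + 3) y = cdist v (y - 3) := by rw [← cdist_shift v (y - 3), e]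
      rw [this]
      exact Finset.inf'_le _ (hmem' y hy)
  · rfl

lemma lb3 : ∀ c : Fin 9 → Fin 3, Surr c → ¬ Function.Injective (codeF c) := by
  intro c hs hinj
  have htr := triples_of_surr c hs
  have hper : ∀ u : Fin 9, c (u + 3) = c u := by
    intro u
    have h1 := htr (u - 1)
    have h2 := htr u
    rw [cwI4] at h1 h2
    rw [show u - 1 + 1 = u from by abel, show u - 1 + 2 = u + 1 from by abel,
      show u - 1 + 3 = u + 2 from by abel] at h1
    simp only [List.map_cons, List.map_nil, List.nodup_cons, List.mem_cons,
      List.mem_singleton, List.not_mem_nil, not_or, List.nodup_nil, and_true] at h1 h2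
    have key : ∀ x y a b : Fin 3, x ≠ a → x ≠ b → y ≠ a → y ≠ b → a ≠ b → x = y := by decide
    exact key (c (u + 3)) (c u) (c (u + 1)) (c (u + 2))
      (fun hh => h2.1.2.1 hh.symm) (fun hh => h2.2.1.1 hh.symm) h1.1.1 h1.1.2.1 h2.1.1
  have h03 : codeF c 3 = codeF c 0 := by
    funext i
    have := codeF_shift c hper 0 i
    rwa [show (0 : Fin 9) + 3 = 3 from by decide] at this
  exact (by decide : (3 : Fin 9) ≠ 0) (hinj h03)

/-- An explicit locating rainbow 4-coloring of `C₉`. -/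
def c4 : Fin 9 → Fin 4 := ![0, 1, 2, 0, 1, 3, 0, 2, 3]

lemma isPath_cwWalk (u : Fin 9) {m : ℕ} (hm : m ≤ 8) : (cwWalk u m).IsPath := by
  rw [Walk.isPath_def, support_cwWalk]
  refine List.Nodup.map_on ?_ List.nodup_range
  intro j1 h1 j2 h2 he
  rw [List.mem_range] at h1 h2
  have h3 : ((j1 : ℕ) : Fin 9) = ((j2 : ℕ) : Fin 9) := add_left_cancel he
  have h4 := congrArg Fin.val h3
  rwa [Fin.val_cast_of_lt (by omega), Fin.val_cast_of_lt (by omega)] at h4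

lemma isPath_ccwWalk (u : Fin 9) {m : ℕ} (hm : m ≤ 8) : (ccwWalk u m).IsPath := by
  rw [Walk.isPath_def, support_ccwWalk]
  refine List.Nodup.map_on ?_ List.nodup_range
  intro j1 h1 j2 h2 he
  rw [List.mem_range] at h1 h2
  have h3 : ((j1 : ℕ) : Fin 9) = ((j2 : ℕ) : Fin 9) := sub_right_injective he
  have h4 := congrArg Fin.val h3
  rwa [Fin.val_cast_of_lt (by omega), Fin.val_cast_of_lt (by omega)] at h4

lemma rainbow4 : IsRainbowVertexColoring G9 c4 := by
  intro u v huv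
  by_cases hle : (v - u).val ≤ 4
  · have e1 : u + (((v - u).val : ℕ) : Fin 9) = v := by rw [Fin.cast_val_eq_self]; abel
    refine ⟨(cwWalk u (v - u).val).copy rfl e1, ?_, ?_⟩
    · rw [Walk.isPath_copy]
      exact isPath_cwWalk u (by omega)
    · have hi : internalVertices ((cwWalk u (v - u).val).copy rfl e1) = cwI u (v - u).val := by
        rw [internalVertices, Walk.support_copy, support_cwWalk]; rfl
      rw [hi]
      have key : ∀ u v : Fin 9, (v - u).val ≤ 4 → ((cwI u (v - u).val).map c4).Nodup := by
        decide
      exact key u v hle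
  · have hle' : (u - v).val ≤ 4 := by
      have key : ∀ u v : Fin 9, u ≠ v → ¬ (v - u).val ≤ 4 → (u - v).val ≤ 4 := by decide
      exact key u v huv hle
    have e2 : u - (((u - v).val : ℕ) : Fin 9) = v := by rw [Fin.cast_val_eq_self]; abel
    refine ⟨(ccwWalk u (u - v).val).copy rfl e2, ?_, ?_⟩
    · rw [Walk.isPath_copy]
      exact isPath_ccwWalk u (by omega)
    · have hi : internalVertices ((ccwWalk u (u - v).val).copy rfl e2) = ccwI u (u - v).val := by
        rw [internalVertices, Walk.support_copy, support_ccwWalk]; rfl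
      rw [hi]
      have key : ∀ u v : Fin 9, (u - v).val ≤ 4 → ((ccwI u (u - v).val).map c4).Nodup := by
        decide
      exact key u v hle'

lemma inj4 : Function.Injective (rainbowCode G9 c4) := by
  have h : rainbowCode G9 c4 = codeF c4 := funext (rainbowCode_eq c4)
  rw [h]
  decide

end C9Aux

open LocatingRainbow SimpleGraph C9Aux in
/-- The cycle graph `C_9` satisfies `rvcl(C_9) = 4`. -/
theorem rvcl_cycleGraph_nine : rvcl (cycleGraph 9) = 4 := by
  have h4 : 4 ∈ {k | ∃ c : Fin 9 → Fin k, IsLocatingRainbowColoring (cycleGraph 9) c} :=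
    ⟨c4, rainbow4, inj4⟩
  refine le_antisymm (Nat.sInf_le h4) (le_csInf ⟨4, h4⟩ ?_)
  rintro k ⟨c, hrb, hinj⟩
  by_contra hlt
  push_neg at hlt
  have hk : k ≤ 3 := by omega
  set c' : Fin 9 → Fin 3 := fun y => Fin.castLE hk (c y) with hc'
  have hs' : Surr c' := by
    intro u v huv
    obtain ⟨L, hL⟩ := surr_of_rainbow c hrb u v huv
    refine ⟨L, ?_⟩
    have hmm : ∀ l : List (Fin 9), ((l.map c).Nodup) → ((l.map c').Nodup) := by
      intro l hl
      have : l.map c' = (l.map c).map (Fin.castLE hk) := by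
        rw [List.map_map]; rfl
      rw [this]
      exact hl.map (Fin.castLE_injective hk)
    rcases hL with ⟨he, hnd⟩ | ⟨he, hnd⟩
    · exact Or.inl ⟨he, hmm _ hnd⟩
    · exact Or.inr ⟨he, hmm _ hnd⟩
  have hcinj : Function.Injective (codeF c) := by
    have h : rainbowCode G9 c = codeF c := funext (rainbowCode_eq c)
    rwa [h] at hinj
  have hinj' : Function.Injective (codeF c') := by
    intro u v he
    apply hcinj
    funext i
    have h1 := codeF_cast hk c u i
    have h2 := codeF_cast hk c v i
    rw [← h1, ← h2]
    exact congrFun he (Fin.castLE hk i)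
  exact lb3 c' hs' hinj'
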